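/- arXiv:2006.14801 — 6 statements merged into one kernel-verified Lean document; each statement's English description precedes it below -/
import Mathlib

section
/- Let P₁ and P₂ be Markov transition kernels on a measurable space (Z, F) having a common stationary distribution ω, with ‖P₂‖_ω < 1, and suppose there exists δ > 0 such that P₁(z, A) ≥ δ P₂(z, A) for all z ∈ Z and A ∈ F. Then ‖P₁‖_ω < 1. -/
open MeasureTheory

/-- The operator norm on `L²₀(ω)` of a transition kernel `P` (viewed as a map
`Z → Measure Z`): the supremum of `‖Pf‖_ω` over mean-zero `f` with `‖f‖_ω = 1`. -/
noncomputable def kernelNorm {Z : Type*} [MeasurableSpace Z]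
    (P : Z → Measure Z) (ω : Measure Z) : ℝ :=
  sSup {t : ℝ | ∃ f : Z → ℝ,
    MemLp f 2 ω ∧ (∫ z, f z ∂ω) = 0 ∧ (∫ z, (f z)^2 ∂ω) = 1 ∧
    t = Real.sqrt (∫ z, (∫ x, f x ∂(P z))^2 ∂ω)}


open scoped ENNReal NNReal

section Aux
variable {α : Type*} [MeasurableSpace α] {μ : Measure α}


variable {α : Type*} [MeasurableSpace α] {μ : Measure α}

lemma inner_toLp_eq {f g : α → ℝ} (hf : MemLp f 2 μ) (hg : MemLp g 2 μ) :
    inner (𝕜 := ℝ) (hf.toLp f) (hg.toLp g) = ∫ x, f x * g x ∂μ := by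
  rw [L2.inner_def]
  refine integral_congr_ae ?_
  filter_upwards [hf.coeFn_toLp, hg.coeFn_toLp] with x hx hy
  simp [hx, hy, RCLike.inner_apply, mul_comm]

lemma norm_toLp_eq_sqrt {f : α → ℝ} (hf : MemLp f 2 μ) :
    ‖(hf.toLp f : Lp ℝ 2 μ)‖ = Real.sqrt (∫ x, (f x)^2 ∂μ) := by
  have h1 : ∫ x, (f x)^2 ∂μ = inner (𝕜 := ℝ) (hf.toLp f) (hf.toLp f) := by
    rw [inner_toLp_eq hf hf]; simp [sq]
  rw [h1, real_inner_self_eq_norm_sq, Real.sqrt_sq (norm_nonneg _)]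

lemma sq_integral_le_cs [IsFiniteMeasure μ] {g : α → ℝ} (hg : MemLp g 2 μ) :
    (∫ x, g x ∂μ)^2 ≤ (μ Set.univ).toReal * ∫ x, (g x)^2 ∂μ := by
  have hone : MemLp (fun _ : α => (1:ℝ)) 2 μ := memLp_const 1
  have h1 : inner (𝕜 := ℝ) (hg.toLp g) (hone.toLp _) = ∫ x, g x ∂μ := by
    rw [inner_toLp_eq hg hone]; simp
  have h2 : inner (𝕜 := ℝ) (hg.toLp g) (hg.toLp g) = ∫ x, (g x)^2 ∂μ := by
    rw [inner_toLp_eq hg hg]; simp [sq]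
  have h3 : inner (𝕜 := ℝ) (hone.toLp (fun _ : α => (1:ℝ))) (hone.toLp _) = (μ Set.univ).toReal := by
    rw [inner_toLp_eq hone hone]; simp; rfl
  have := real_inner_mul_inner_self_le (hg.toLp g) (hone.toLp (fun _ : α => (1:ℝ)))
  rw [h1, h2, h3] at this
  nlinarith [this]

lemma memℒp_of_sq_lintegral {g : α → ℝ} (hg : AEStronglyMeasurable g μ)
    (h : ∫⁻ x, ENNReal.ofReal ((g x)^2) ∂μ < ⊤) : MemLp g 2 μ := by
  rw [memLp_two_iff_integrable_sq hg]
  refine ⟨(hg.aemeasurable.pow_const 2).aestronglyMeasurable, ?_⟩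
  rwa [hasFiniteIntegral_iff_ofReal (Filter.Eventually.of_forall fun x => sq_nonneg _)]

lemma lintegral_sq_lt_top {g : α → ℝ} (hg : MemLp g 2 μ) :
    ∫⁻ x, ENNReal.ofReal ((g x)^2) ∂μ < ⊤ := by
  have h := hg.integrable_sq.2
  rwa [hasFiniteIntegral_iff_ofReal
    (Filter.Eventually.of_forall fun x => sq_nonneg _)] at h

lemma integral_sq_eq_toReal {g : α → ℝ} (hg : AEStronglyMeasurable g μ) :
    ∫ x, (g x)^2 ∂μ = (∫⁻ x, ENNReal.ofReal ((g x)^2) ∂μ).toReal :=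
  integral_eq_lintegral_of_nonneg_ae (Filter.Eventually.of_forall fun x => sq_nonneg _)
    (hg.aemeasurable.pow_const 2).aestronglyMeasurable

open ProbabilityTheory in
lemma bind_eq_of_invariant {Z : Type*} [MeasurableSpace Z] (ω : Measure Z) (P : Kernel Z Z)
    [IsMarkovKernel P] (hinv : ∀ A : Set Z, MeasurableSet A → ∫⁻ z, P z A ∂ω = ω A) :
    ω.bind (fun z => P z) = ω := by
  ext A hA
  rw [Measure.bind_apply hA (P.measurable.aemeasurable)]
  exact hinv A hA

open ProbabilityTheory in
lemma lintegral_invariant {Z : Type*} [MeasurableSpace Z] (ω : Measure Z) (P : Kernel Z Z)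
    [IsMarkovKernel P] (hinv : ∀ A : Set Z, MeasurableSet A → ∫⁻ z, P z A ∂ω = ω A)
    {q : Z → ℝ≥0∞} (hq : Measurable q) :
    ∫⁻ z, ∫⁻ x, q x ∂(P z) ∂ω = ∫⁻ x, q x ∂ω := by
  conv_rhs => rw [← bind_eq_of_invariant ω P hinv]
  rw [Measure.lintegral_bind P.measurable.aemeasurable hq.aemeasurable]

open ProbabilityTheory in
lemma ae_ae_eq_of_invariant {Z : Type*} [MeasurableSpace Z] (ω : Measure Z) (P : Kernel Z Z)
    [IsMarkovKernel P] (hinv : ∀ A : Set Z, MeasurableSet A → ∫⁻ z, P z A ∂ω = ω A)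
    {f g : Z → ℝ} (hfg : f =ᵐ[ω] g) :
    ∀ᵐ z ∂ω, f =ᵐ[(P z : Measure Z)] g := by
  obtain ⟨s, hsub, hsm, hs0⟩ := exists_measurable_superset_of_null hfg
  have h0 : ∫⁻ z, P z s ∂ω = 0 := by rw [hinv s hsm, hs0]
  have := (lintegral_eq_zero_iff (P.measurable_coe hsm)).mp h0
  filter_upwards [this] with z hz
  exact measure_mono_null hsub hz

open ProbabilityTheory in
lemma kernel_contract {Z : Type*} [MeasurableSpace Z] (ω : Measure Z) [IsProbabilityMeasure ω]
    (P : Kernel Z Z) [IsMarkovKernel P]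
    (hinv : ∀ A : Set Z, MeasurableSet A → ∫⁻ z, P z A ∂ω = ω A)
    {f : Z → ℝ} (hf : MemLp f 2 ω) :
    MemLp (fun z => ∫ x, f x ∂(P z : Measure Z)) 2 ω ∧
    ∫ z, (∫ x, f x ∂(P z : Measure Z))^2 ∂ω ≤ ∫ z, (f z)^2 ∂ω := by
  set g := hf.1.mk f with hgdef
  have hgm : StronglyMeasurable g := hf.1.stronglyMeasurable_mk
  have hfg : f =ᵐ[ω] g := hf.1.ae_eq_mk
  have hgl : MemLp g 2 ω := hf.ae_eq hfg
  set G2 : Z → ℝ≥0∞ := fun x => ENNReal.ofReal ((g x)^2) with hG2def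
  have hG2m : Measurable G2 := (hgm.measurable.pow_const 2).ennreal_ofReal
  have key0 : ∫⁻ z, ∫⁻ x, G2 x ∂(P z : Measure Z) ∂ω = ∫⁻ x, G2 x ∂ω :=
    lintegral_invariant ω P hinv hG2m
  have hfin : ∫⁻ x, G2 x ∂ω < ⊤ := lintegral_sq_lt_top hgl
  have hinnerm : Measurable fun z => ∫⁻ x, G2 x ∂(P z : Measure Z) :=
    Measurable.lintegral_kernel hG2m
  have hae_fin : ∀ᵐ z ∂ω, ∫⁻ x, G2 x ∂(P z : Measure Z) < ⊤ := by
    refine ae_lt_top hinnerm ?_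
    rw [key0]; exact hfin.ne
  have hae_eq : ∀ᵐ z ∂ω, f =ᵐ[(P z : Measure Z)] g := ae_ae_eq_of_invariant ω P hinv hfg
  -- pointwise bound
  have hptwise : ∀ᵐ z ∂ω, ENNReal.ofReal ((∫ x, f x ∂(P z : Measure Z))^2)
      ≤ ∫⁻ x, G2 x ∂(P z : Measure Z) := by
    filter_upwards [hae_fin, hae_eq] with z hz hez
    have hgz : MemLp g 2 (P z : Measure Z) :=
      memℒp_of_sq_lintegral hgm.aestronglyMeasurable hz
    have hcs := sq_integral_le_cs hgz
    rw [integral_congr_ae hez]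
    have hmass : ((P z : Measure Z) Set.univ).toReal = 1 := by simp
    rw [hmass, one_mul] at hcs
    calc ENNReal.ofReal ((∫ x, g x ∂(P z : Measure Z))^2)
        ≤ ENNReal.ofReal (∫ x, (g x)^2 ∂(P z : Measure Z)) := ENNReal.ofReal_le_ofReal hcs
      _ = ∫⁻ x, G2 x ∂(P z : Measure Z) := by
          rw [integral_sq_eq_toReal hgm.aestronglyMeasurable, ENNReal.ofReal_toReal hz.ne]
  have hlint : ∫⁻ z, ENNReal.ofReal ((∫ x, f x ∂(P z : Measure Z))^2) ∂ω ≤ ∫⁻ x, G2 x ∂ω := by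
    calc ∫⁻ z, ENNReal.ofReal ((∫ x, f x ∂(P z : Measure Z))^2) ∂ω
        ≤ ∫⁻ z, ∫⁻ x, G2 x ∂(P z : Measure Z) ∂ω := lintegral_mono_ae hptwise
      _ = _ := key0
  -- a.e. strong measurability of the integral map
  have hsm' : StronglyMeasurable fun z => ∫ x, g x ∂(P z : Measure Z) := by
    apply MeasureTheory.StronglyMeasurable.integral_kernel_prod_right (f := fun _ y => g y)
    exact hgm.comp_measurable measurable_snd
  have haesm : AEStronglyMeasurable (fun z => ∫ x, f x ∂(P z : Measure Z)) ω := by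
    refine ⟨fun z => ∫ x, g x ∂(P z : Measure Z), hsm', ?_⟩
    filter_upwards [hae_eq] with z hz
    exact integral_congr_ae hz
  have hmem : MemLp (fun z => ∫ x, f x ∂(P z : Measure Z)) 2 ω :=
    memℒp_of_sq_lintegral haesm (lt_of_le_of_lt hlint hfin)
  refine ⟨hmem, ?_⟩
  have h1 : ∫ z, (f z)^2 ∂ω = (∫⁻ x, G2 x ∂ω).toReal := by
    rw [show ∫ z, (f z)^2 ∂ω = ∫ z, (g z)^2 ∂ω from
      integral_congr_ae (hfg.mono fun x hx => by simp only [hx]),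
        integral_sq_eq_toReal hgm.aestronglyMeasurable]
  rw [integral_sq_eq_toReal haesm, h1]
  exact ENNReal.toReal_mono hfin.ne hlint

open ProbabilityTheory in
lemma main_ineq {Z : Type*} [MeasurableSpace Z] (ω : Measure Z) [IsProbabilityMeasure ω]
    (P₁ P₂ : Kernel Z Z) [IsMarkovKernel P₁] [IsMarkovKernel P₂]
    (hinv₁ : ∀ A : Set Z, MeasurableSet A → ∫⁻ z, P₁ z A ∂ω = ω A)
    (hinv₂ : ∀ A : Set Z, MeasurableSet A → ∫⁻ z, P₂ z A ∂ω = ω A)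
    (δ : ℝ) (hδ : 0 < δ) (hδ1 : δ ≤ 1)
    (hmin : ∀ (z : Z) (A : Set Z), MeasurableSet A →
      ENNReal.ofReal δ * P₂ z A ≤ P₁ z A)
    {f : Z → ℝ} (hf : MemLp f 2 ω) (hf2 : (∫ z, (f z)^2 ∂ω) = 1) :
    Real.sqrt (∫ z, (∫ x, f x ∂(P₁ z : Measure Z))^2 ∂ω)
      ≤ δ * Real.sqrt (∫ z, (∫ x, f x ∂(P₂ z : Measure Z))^2 ∂ω) + (1 - δ) := by
  have hδ0' : (0:ℝ) ≤ 1 - δ := by linarith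
  set g := hf.1.mk f with hgdef
  have hgm : StronglyMeasurable g := hf.1.stronglyMeasurable_mk
  have hfg : f =ᵐ[ω] g := hf.1.ae_eq_mk
  have hgl : MemLp g 2 ω := hf.ae_eq hfg
  set G2 : Z → ℝ≥0∞ := fun x => ENNReal.ofReal ((g x)^2) with hG2def
  have hG2m : Measurable G2 := (hgm.measurable.pow_const 2).ennreal_ofReal
  -- the defect measures
  set ν : Z → Measure Z := fun z => (P₁ z : Measure Z) - ENNReal.ofReal δ • (P₂ z : Measure Z)
    with hνdef
  have hle : ∀ z, (ENNReal.ofReal δ • (P₂ z : Measure Z)) ≤ P₁ z := by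
    intro z
    rw [Measure.le_iff]
    intro s hs
    simpa [Measure.smul_apply] using hmin z s hs
  have hfinsmul : ∀ z, IsFiniteMeasure (ENNReal.ofReal δ • (P₂ z : Measure Z)) := by
    intro z
    constructor
    simp [Measure.smul_apply, ENNReal.mul_lt_top, ENNReal.ofReal_lt_top]
  have hsum : ∀ z, ν z + ENNReal.ofReal δ • (P₂ z : Measure Z) = P₁ z := by
    intro z
    have := hfinsmul z
    exact Measure.sub_add_cancel_of_le (hle z)
  have hν_le : ∀ z, ν z ≤ (P₁ z : Measure Z) := fun z => Measure.sub_le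
  have hν_univ : ∀ z, ν z Set.univ = ENNReal.ofReal (1 - δ) := by
    intro z
    have h := congrArg (fun m : Measure Z => m Set.univ) (hsum z)
    simp only [Measure.coe_add, Pi.add_apply, Measure.smul_apply, smul_eq_mul,
      measure_univ, mul_one] at h
    have := ENNReal.eq_sub_of_add_eq (ENNReal.ofReal_ne_top) h
    rw [this, ← ENNReal.ofReal_one, ← ENNReal.ofReal_sub _ hδ.le]
  have hνfin : ∀ z, IsFiniteMeasure (ν z) := by
    intro z
    constructor
    rw [hν_univ z]
    exact ENNReal.ofReal_lt_top
  -- lintegral identities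
  have key₁ : ∫⁻ z, ∫⁻ x, G2 x ∂(P₁ z : Measure Z) ∂ω = ∫⁻ x, G2 x ∂ω :=
    lintegral_invariant ω P₁ hinv₁ hG2m
  have key₂ : ∫⁻ z, ∫⁻ x, G2 x ∂(P₂ z : Measure Z) ∂ω = ∫⁻ x, G2 x ∂ω :=
    lintegral_invariant ω P₂ hinv₂ hG2m
  have hMfin : ∫⁻ x, G2 x ∂ω < ⊤ := lintegral_sq_lt_top hgl
  have hM1 : ∫⁻ x, G2 x ∂ω = 1 := by
    have h1 : (∫⁻ x, G2 x ∂ω).toReal = 1 := by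
      rw [← integral_sq_eq_toReal hgm.aestronglyMeasurable, ←
        integral_congr_ae (hfg.mono fun x hx => by simp only [hx] :
          (fun z => (f z)^2) =ᵐ[ω] fun z => (g z)^2), hf2]
    rw [← ENNReal.ofReal_toReal hMfin.ne, h1, ENNReal.ofReal_one]
  -- decomposition of lintegrals
  have hdec_lint : ∀ z, ∫⁻ x, G2 x ∂(P₁ z : Measure Z)
      = ∫⁻ x, G2 x ∂(ν z) + ENNReal.ofReal δ * ∫⁻ x, G2 x ∂(P₂ z : Measure Z) := by
    intro z
    conv_lhs => rw [← hsum z]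
    rw [lintegral_add_measure, lintegral_smul_measure, smul_eq_mul]
  have hLν : ∫⁻ z, ∫⁻ x, G2 x ∂(ν z) ∂ω = ENNReal.ofReal (1 - δ) := by
    have h := key₁
    have heq : ∫⁻ z, ∫⁻ x, G2 x ∂(P₁ z : Measure Z) ∂ω
        = ∫⁻ z, ∫⁻ x, G2 x ∂(ν z) ∂ω
          + ENNReal.ofReal δ * ∫⁻ z, ∫⁻ x, G2 x ∂(P₂ z : Measure Z) ∂ω := by
      simp_rw [hdec_lint]
      rw [lintegral_add_right _ ((Measurable.lintegral_kernel hG2m).const_mul _),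
        lintegral_const_mul' _ _ ENNReal.ofReal_ne_top]
    rw [heq, key₂, hM1, mul_one] at h
    have := ENNReal.eq_sub_of_add_eq ENNReal.ofReal_ne_top h
    rw [this, ← ENNReal.ofReal_one, ← ENNReal.ofReal_sub _ hδ.le]
  -- a.e. facts
  have hin₁ : Measurable fun z => ∫⁻ x, G2 x ∂(P₁ z : Measure Z) :=
    Measurable.lintegral_kernel hG2m
  have hin₂ : Measurable fun z => ∫⁻ x, G2 x ∂(P₂ z : Measure Z) :=
    Measurable.lintegral_kernel hG2m
  have hae_fin₁ : ∀ᵐ z ∂ω, ∫⁻ x, G2 x ∂(P₁ z : Measure Z) < ⊤ :=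
    ae_lt_top hin₁ (by rw [key₁, hM1]; exact ENNReal.one_ne_top)
  have hae_fin₂ : ∀ᵐ z ∂ω, ∫⁻ x, G2 x ∂(P₂ z : Measure Z) < ⊤ :=
    ae_lt_top hin₂ (by rw [key₂, hM1]; exact ENNReal.one_ne_top)
  have hae_eq₁ : ∀ᵐ z ∂ω, f =ᵐ[(P₁ z : Measure Z)] g := ae_ae_eq_of_invariant ω P₁ hinv₁ hfg
  have hae_eq₂ : ∀ᵐ z ∂ω, f =ᵐ[(P₂ z : Measure Z)] g := ae_ae_eq_of_invariant ω P₂ hinv₂ hfg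
  set aν : Z → ℝ := fun z => ∫ x, g x ∂(ν z) with haνdef
  set b : Z → ℝ := fun z => ∫ x, g x ∂(P₂ z : Measure Z) with hbdef
  set h₁ : Z → ℝ := fun z => ∫ x, g x ∂(P₁ z : Measure Z) with hh₁def
  have hsmb : StronglyMeasurable b := by
    apply MeasureTheory.StronglyMeasurable.integral_kernel_prod_right (f := fun _ y => g y)
    exact hgm.comp_measurable measurable_snd
  have hsmh₁ : StronglyMeasurable h₁ := by
    apply MeasureTheory.StronglyMeasurable.integral_kernel_prod_right (f := fun _ y => g y)
    exact hgm.comp_measurable measurable_snd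
  have hae_pkg : ∀ᵐ z ∂ω, (h₁ z = aν z + δ * b z) ∧
      (ENNReal.ofReal ((aν z)^2) ≤ ENNReal.ofReal (1-δ) * ∫⁻ x, G2 x ∂(ν z)) := by
    filter_upwards [hae_fin₁, hae_fin₂] with z hz1 hz2
    haveI := hνfin z
    haveI := hfinsmul z
    have hzν : ∫⁻ x, G2 x ∂(ν z) < ⊤ :=
      lt_of_le_of_lt (lintegral_mono' (hν_le z) le_rfl) hz1
    have hg1 : MemLp g 2 (P₁ z : Measure Z) :=
      memℒp_of_sq_lintegral hgm.aestronglyMeasurable hz1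
    have hg2 : MemLp g 2 (P₂ z : Measure Z) :=
      memℒp_of_sq_lintegral hgm.aestronglyMeasurable hz2
    have hgν : MemLp g 2 (ν z) :=
      memℒp_of_sq_lintegral hgm.aestronglyMeasurable hzν
    haveI : IsFiniteMeasure (P₂ z : Measure Z) := ⟨by simp⟩
    have hi2 : Integrable g (P₂ z : Measure Z) := hg2.integrable (one_le_two : (1:ℝ≥0∞) ≤ 2)
    have hiν : Integrable g (ν z) := hgν.integrable (one_le_two : (1:ℝ≥0∞) ≤ 2)
    constructor
    · show (∫ x, g x ∂(P₁ z : Measure Z)) = _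
      conv_lhs => rw [← hsum z]
      rw [integral_add_measure hiν (hi2.smul_measure ENNReal.ofReal_ne_top),
        integral_smul_measure, ENNReal.toReal_ofReal hδ.le]
      rfl
    · have hcs := sq_integral_le_cs hgν
      rw [hν_univ z, ENNReal.toReal_ofReal hδ0'] at hcs
      calc ENNReal.ofReal ((aν z)^2)
          ≤ ENNReal.ofReal ((1-δ) * ∫ x, (g x)^2 ∂(ν z)) := ENNReal.ofReal_le_ofReal hcs
        _ = ENNReal.ofReal (1-δ) * ENNReal.ofReal (∫ x, (g x)^2 ∂(ν z)) :=
            ENNReal.ofReal_mul hδ0'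
        _ = ENNReal.ofReal (1-δ) * ∫⁻ x, G2 x ∂(ν z) := by
            rw [integral_sq_eq_toReal hgm.aestronglyMeasurable, ENNReal.ofReal_toReal hzν.ne]
  -- lintegral bound for aν
  have haν_lint : ∫⁻ z, ENNReal.ofReal ((aν z)^2) ∂ω ≤ ENNReal.ofReal ((1-δ)^2) := by
    calc ∫⁻ z, ENNReal.ofReal ((aν z)^2) ∂ω
        ≤ ∫⁻ z, ENNReal.ofReal (1-δ) * ∫⁻ x, G2 x ∂(ν z) ∂ω :=
          lintegral_mono_ae (hae_pkg.mono fun z hz => hz.2)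
      _ = ENNReal.ofReal (1-δ) * ∫⁻ z, ∫⁻ x, G2 x ∂(ν z) ∂ω :=
          lintegral_const_mul' _ _ ENNReal.ofReal_ne_top
      _ = ENNReal.ofReal (1-δ) * ENNReal.ofReal (1-δ) := by rw [hLν]
      _ = ENNReal.ofReal ((1-δ)^2) := by rw [← ENNReal.ofReal_mul hδ0', sq]
  have haesm_aν : AEStronglyMeasurable aν ω :=
    ⟨h₁ - δ • b, hsmh₁.sub (hsmb.const_smul δ), by
      filter_upwards [hae_pkg] with z hz
      have hzz : (h₁ - δ • b) z = h₁ z - δ * b z := rfl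
      rw [hzz, hz.1]; ring⟩
  have hmem_aν : MemLp aν 2 ω :=
    memℒp_of_sq_lintegral haesm_aν (lt_of_le_of_lt haν_lint ENNReal.ofReal_lt_top)
  have haν_int : ∫ z, (aν z)^2 ∂ω ≤ (1-δ)^2 := by
    rw [integral_sq_eq_toReal haesm_aν]
    calc (∫⁻ z, ENNReal.ofReal ((aν z)^2) ∂ω).toReal
        ≤ (ENNReal.ofReal ((1-δ)^2)).toReal :=
          ENNReal.toReal_mono ENNReal.ofReal_ne_top haν_lint
      _ = (1-δ)^2 := ENNReal.toReal_ofReal (sq_nonneg _)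
  have hmem_b : MemLp b 2 ω := (kernel_contract ω P₂ hinv₂ hgl).1
  have hmem_h₁ : MemLp h₁ 2 ω := (kernel_contract ω P₁ hinv₁ hgl).1
  -- Lp assembly
  have hsum_ae : h₁ =ᵐ[ω] aν + δ • b := by
    filter_upwards [hae_pkg] with z hz
    simpa [smul_eq_mul] using hz.1
  have hmem_sum : MemLp (aν + δ • b) 2 ω := hmem_aν.add (hmem_b.const_smul δ)
  have hHeq : hmem_h₁.toLp h₁ = hmem_aν.toLp aν + δ • hmem_b.toLp b := by
    rw [MemLp.toLp_congr hmem_h₁ hmem_sum hsum_ae, ← MemLp.toLp_const_smul δ hmem_b,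
      ← MemLp.toLp_add]
  have hnorm : ‖hmem_h₁.toLp h₁‖ ≤ (1-δ) + δ * ‖hmem_b.toLp b‖ := by
    rw [hHeq]
    calc ‖hmem_aν.toLp aν + δ • hmem_b.toLp b‖
        ≤ ‖hmem_aν.toLp aν‖ + ‖δ • hmem_b.toLp b‖ := norm_add_le _ _
      _ = ‖hmem_aν.toLp aν‖ + δ * ‖hmem_b.toLp b‖ := by
          rw [norm_smul, Real.norm_of_nonneg hδ.le]
      _ ≤ (1-δ) + δ * ‖hmem_b.toLp b‖ := by
          have : ‖hmem_aν.toLp aν‖ ≤ 1 - δ := by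
            rw [norm_toLp_eq_sqrt]
            calc Real.sqrt (∫ z, (aν z)^2 ∂ω) ≤ Real.sqrt ((1-δ)^2) :=
                Real.sqrt_le_sqrt haν_int
              _ = 1 - δ := by rw [Real.sqrt_sq hδ0']
          linarith
  -- translate back to f
  have e₁ : ∫ z, (∫ x, f x ∂(P₁ z : Measure Z))^2 ∂ω = ∫ z, (h₁ z)^2 ∂ω := by
    refine integral_congr_ae ?_
    filter_upwards [hae_eq₁] with z hz
    rw [hh₁def]
    simp only [integral_congr_ae hz]
  have e₂ : ∫ z, (∫ x, f x ∂(P₂ z : Measure Z))^2 ∂ω = ∫ z, (b z)^2 ∂ω := by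
    refine integral_congr_ae ?_
    filter_upwards [hae_eq₂] with z hz
    rw [hbdef]
    simp only [integral_congr_ae hz]
  rw [e₁, e₂, ← norm_toLp_eq_sqrt hmem_h₁, ← norm_toLp_eq_sqrt hmem_b]
  linarith

end Aux

/-- If `P₁` and `P₂` are Markov transition kernels with common stationary
distribution `ω`, `‖P₂‖_ω < 1`, and `P₁(z,A) ≥ δ P₂(z,A)` for some `δ > 0`,
then `‖P₁‖_ω < 1`. -/
theorem stmt_3 {Z : Type*} [MeasurableSpace Z]
    (ω : Measure Z) [IsProbabilityMeasure ω]
    (P₁ P₂ : ProbabilityTheory.Kernel Z Z)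
    [ProbabilityTheory.IsMarkovKernel P₁] [ProbabilityTheory.IsMarkovKernel P₂]
    (hinv₁ : ∀ A : Set Z, MeasurableSet A → ∫⁻ z, P₁ z A ∂ω = ω A)
    (hinv₂ : ∀ A : Set Z, MeasurableSet A → ∫⁻ z, P₂ z A ∂ω = ω A)
    (hP₂ : kernelNorm (fun z => P₂ z) ω < 1)
    (δ : ℝ) (hδ : 0 < δ)
    (hmin : ∀ (z : Z) (A : Set Z), MeasurableSet A →
      ENNReal.ofReal δ * P₂ z A ≤ P₁ z A) :
    kernelNorm (fun z => P₁ z) ω < 1 := by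
  classical
  have hZ : Nonempty Z := by
    by_contra h
    rw [not_nonempty_iff] at h
    have h1 : ω Set.univ = 1 := measure_univ
    rw [Set.univ_eq_empty_iff.mpr h] at h1
    simp at h1
  have hδ1 : δ ≤ 1 := by
    obtain ⟨z₀⟩ := hZ
    have h := hmin z₀ Set.univ MeasurableSet.univ
    simp only [measure_univ, mul_one] at h
    exact ENNReal.ofReal_le_one.mp h
  have hbdd2 : BddAbove {t : ℝ | ∃ f : Z → ℝ,
      MemLp f 2 ω ∧ (∫ z, f z ∂ω) = 0 ∧ (∫ z, (f z)^2 ∂ω) = 1 ∧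
      t = Real.sqrt (∫ z, (∫ x, f x ∂((fun z => (P₂ z : Measure Z)) z))^2 ∂ω)} := by
    refine ⟨1, ?_⟩
    rintro t ⟨f, hf, -, hf2, rfl⟩
    have h := (kernel_contract ω P₂ hinv₂ hf).2
    rw [hf2] at h
    calc Real.sqrt (∫ z, (∫ x, f x ∂((fun z => (P₂ z : Measure Z)) z))^2 ∂ω)
        ≤ Real.sqrt 1 := Real.sqrt_le_sqrt h
      _ = 1 := Real.sqrt_one
  rw [kernelNorm]
  rcases Set.eq_empty_or_nonempty {t : ℝ | ∃ f : Z → ℝ,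
      MemLp f 2 ω ∧ (∫ z, f z ∂ω) = 0 ∧ (∫ z, (f z)^2 ∂ω) = 1 ∧
      t = Real.sqrt (∫ z, (∫ x, f x ∂((fun z => (P₁ z : Measure Z)) z))^2 ∂ω)} with h | h
  · rw [h, Real.sSup_empty]; norm_num
  · refine lt_of_le_of_lt (csSup_le h ?_)
      (show δ * kernelNorm (fun z => (P₂ z : Measure Z)) ω + (1 - δ) < 1 by nlinarith)
    rintro t ⟨f, hf, hmean, hf2, rfl⟩
    have key := main_ineq ω P₁ P₂ hinv₁ hinv₂ δ hδ hδ1 hmin hf hf2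
    have ht2 : Real.sqrt (∫ z, (∫ x, f x ∂(P₂ z : Measure Z))^2 ∂ω)
        ≤ kernelNorm (fun z => (P₂ z : Measure Z)) ω :=
      le_csSup hbdd2 ⟨f, hf, hmean, hf2, rfl⟩
    calc Real.sqrt (∫ z, (∫ x, f x ∂((fun z => (P₁ z : Measure Z)) z))^2 ∂ω)
        ≤ δ * Real.sqrt (∫ z, (∫ x, f x ∂(P₂ z : Measure Z))^2 ∂ω) + (1 - δ) := key
      _ ≤ δ * kernelNorm (fun z => (P₂ z : Measure Z)) ω + (1 - δ) := by nlinarith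
end

section
/- Let P₁ and P₀ be Markov transition kernels on (Z, F) such that for every r ∈ (0,1) the mixture P_r = r P₁ + (1−r) P₀ is reversible with respect to ω. If ‖P_{r₀}‖_ω < 1 for some r₀ ∈ (0,1), then ‖P_r‖_ω < 1 for every r ∈ (0,1). -/
open MeasureTheory
open scoped ENNReal

/-- The mixture kernel `P_r = r P₁ + (1-r) P₀`, as a map `Z → Measure Z`. -/
noncomputable def mixKernel {Z : Type*} [MeasurableSpace Z]
    (P₁ P₀ : ProbabilityTheory.Kernel Z Z) (r : ℝ) : Z → Measure Z :=
  fun z => ENNReal.ofReal r • P₁ z + ENNReal.ofReal (1 - r) • P₀ z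

section Aux

open ProbabilityTheory
open scoped ENNReal NNReal

variable {Z : Type*} [MeasurableSpace Z]

/-- The mixture, packaged as a kernel. -/
noncomputable def mixK (P₁ P₀ : Kernel Z Z) (r : ℝ) : Kernel Z Z :=
  ⟨fun z => ENNReal.ofReal r • P₁ z + ENNReal.ofReal (1 - r) • P₀ z, by
    refine Measure.measurable_of_measurable_coe _ fun s hs => ?_
    simp only [Measure.coe_add, Measure.coe_smul, Pi.add_apply, Pi.smul_apply, smul_eq_mul]
    exact ((P₁.measurable_coe hs).const_mul _).add ((P₀.measurable_coe hs).const_mul _)⟩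

lemma mixK_eq (P₁ P₀ : Kernel Z Z) (r : ℝ) :
    (fun z => mixK P₁ P₀ r z) = mixKernel P₁ P₀ r := rfl

lemma mixKernel_apply_set (P₁ P₀ : Kernel Z Z) (r : ℝ) (z : Z) (s : Set Z) :
    mixKernel P₁ P₀ r z s
      = ENNReal.ofReal r * P₁ z s + ENNReal.ofReal (1 - r) * P₀ z s := by
  simp [mixKernel]

lemma mixKernel_univ (P₁ P₀ : Kernel Z Z) [IsMarkovKernel P₁] [IsMarkovKernel P₀]
    {r : ℝ} (h0 : 0 ≤ r) (h1 : r ≤ 1) (z : Z) :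
    mixKernel P₁ P₀ r z Set.univ = 1 := by
  rw [mixKernel_apply_set]
  simp only [measure_univ, mul_one]
  rw [← ENNReal.ofReal_add h0 (by linarith)]
  norm_num

variable (ω : Measure Z) (κ : Kernel Z Z)

lemma stat_lintegral (hstat : ω.bind (fun z => κ z) = ω) {g : Z → ℝ≥0∞}
    (hg : Measurable g) :
    ∫⁻ z, ∫⁻ x, g x ∂(κ z) ∂ω = ∫⁻ x, g x ∂ω := by
  conv_rhs => rw [← hstat]
  rw [Measure.lintegral_bind κ.measurable.aemeasurable hg.aemeasurable]

lemma stat_null (hstat : ω.bind (fun z => κ z) = ω) {N : Set Z}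
    (hN : MeasurableSet N) (h0 : ω N = 0) :
    ∀ᵐ z ∂ω, κ z N = 0 := by
  have h : ∫⁻ z, κ z N ∂ω = 0 := by
    rw [← Measure.bind_apply hN κ.measurable.aemeasurable, hstat, h0]
  have := (lintegral_eq_zero_iff (κ.measurable_coe hN)).mp h
  filter_upwards [this] with z hz using hz

lemma stat_integrable [IsMarkovKernel κ] (hstat : ω.bind (fun z => κ z) = ω)
    {g : Z → ℝ} (hg : Measurable g) (hg1 : ∫⁻ x, (‖g x‖₊ : ℝ≥0∞) ∂ω ≠ ⊤) :
    ∀ᵐ z ∂ω, Integrable g (κ z) := by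
  have h : ∫⁻ z, ∫⁻ x, (‖g x‖₊ : ℝ≥0∞) ∂(κ z) ∂ω ≠ ⊤ := by
    exact ne_of_eq_of_ne (stat_lintegral ω κ hstat hg.enorm) hg1
  have h2 : ∀ᵐ z ∂ω, ∫⁻ x, (‖g x‖₊ : ℝ≥0∞) ∂(κ z) < ⊤ :=
    ae_lt_top (Measurable.lintegral_kernel hg.enorm) h
  filter_upwards [h2] with z hz
  exact ⟨hg.aestronglyMeasurable, hz⟩

lemma jensen_sq [IsMarkovKernel κ] [IsProbabilityMeasure ω]
    (hstat : ω.bind (fun z => κ z) = ω) {g : Z → ℝ} (hg : Measurable g) :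
    ∫⁻ z, ((‖∫ x, g x ∂(κ z)‖₊ : ℝ≥0∞)) ^ 2 ∂ω ≤ ∫⁻ x, ((‖g x‖₊ : ℝ≥0∞)) ^ 2 ∂ω := by
  have step1 : ∀ z : Z, ((‖∫ x, g x ∂(κ z)‖₊ : ℝ≥0∞)) ^ 2
      ≤ ∫⁻ x, ((‖g x‖₊ : ℝ≥0∞)) ^ 2 ∂(κ z) := by
    intro z
    have h1 : (‖∫ x, g x ∂(κ z)‖₊ : ℝ≥0∞) ≤ ∫⁻ x, (‖g x‖₊ : ℝ≥0∞) ∂(κ z) :=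
      enorm_integral_le_lintegral_enorm _
    have hconj : Real.HolderConjugate 2 2 := Real.HolderConjugate.two_two
    have h2 := ENNReal.lintegral_mul_le_Lp_mul_Lq (κ z) hconj
      (hg.enorm.aemeasurable) (aemeasurable_const (b := (1 : ℝ≥0∞)))
    simp only [Pi.mul_apply, mul_one, ENNReal.one_rpow, lintegral_const, measure_univ,
      ENNReal.one_rpow, one_mul] at h2
    have h2' : ∫⁻ x, (‖g x‖₊ : ℝ≥0∞) ∂(κ z)
        ≤ (∫⁻ x, ((‖g x‖₊ : ℝ≥0∞)) ^ (2 : ℝ) ∂(κ z)) ^ (1 / 2 : ℝ) := by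
      simpa [enorm_eq_nnnorm] using h2
    have h3 : (‖∫ x, g x ∂(κ z)‖₊ : ℝ≥0∞)
        ≤ (∫⁻ x, ((‖g x‖₊ : ℝ≥0∞)) ^ (2 : ℝ) ∂(κ z)) ^ (1 / 2 : ℝ) := h1.trans h2'
    have h4 : ((‖∫ x, g x ∂(κ z)‖₊ : ℝ≥0∞)) ^ 2
        ≤ ((∫⁻ x, ((‖g x‖₊ : ℝ≥0∞)) ^ (2 : ℝ) ∂(κ z)) ^ (1 / 2 : ℝ)) ^ 2 := by
      rw [pow_two, pow_two]; exact mul_le_mul' h3 h3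
    calc ((‖∫ x, g x ∂(κ z)‖₊ : ℝ≥0∞)) ^ 2
        ≤ ((∫⁻ x, ((‖g x‖₊ : ℝ≥0∞)) ^ (2 : ℝ) ∂(κ z)) ^ (1 / 2 : ℝ)) ^ 2 := h4
      _ = ∫⁻ x, ((‖g x‖₊ : ℝ≥0∞)) ^ (2 : ℝ) ∂(κ z) := by
          rw [← ENNReal.rpow_natCast _ 2, ← ENNReal.rpow_mul]
          norm_num
      _ = ∫⁻ x, ((‖g x‖₊ : ℝ≥0∞)) ^ 2 ∂(κ z) := by
          refine lintegral_congr fun x => ?_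
          rw [← ENNReal.rpow_natCast _ 2]; norm_num
  calc ∫⁻ z, ((‖∫ x, g x ∂(κ z)‖₊ : ℝ≥0∞)) ^ 2 ∂ω
      ≤ ∫⁻ z, ∫⁻ x, ((‖g x‖₊ : ℝ≥0∞)) ^ 2 ∂(κ z) ∂ω := lintegral_mono step1
    _ = ∫⁻ x, ((‖g x‖₊ : ℝ≥0∞)) ^ 2 ∂ω :=
        stat_lintegral ω κ hstat (hg.enorm.pow_const 2)

lemma eLpNorm_two_eq (h : Z → ℝ) (μ : Measure Z) :
    eLpNorm h 2 μ = (∫⁻ z, ((‖h z‖₊ : ℝ≥0∞)) ^ 2 ∂μ) ^ (1 / 2 : ℝ) := by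
  rw [eLpNorm_eq_lintegral_rpow_enorm_toReal two_ne_zero ENNReal.ofNat_ne_top]
  congr 1
  refine lintegral_congr fun z => ?_
  rw [ENNReal.toReal_ofNat, ← ENNReal.rpow_natCast _ 2]
  norm_num [enorm_eq_nnnorm]

lemma sqrt_integral_sq_eq (h : Z → ℝ) (μ : Measure Z) (hm : AEStronglyMeasurable h μ) :
    Real.sqrt (∫ z, (h z) ^ 2 ∂μ) = (eLpNorm h 2 μ).toReal := by
  have hsq : AEStronglyMeasurable (fun z => h z ^ 2) μ := by
    exact hm.pow 2
  have h1 : ∫ z, (h z) ^ 2 ∂μ = (∫⁻ z, ((‖h z‖₊ : ℝ≥0∞)) ^ 2 ∂μ).toReal := by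
    rw [integral_eq_lintegral_of_nonneg_ae
      (Filter.Eventually.of_forall fun z => sq_nonneg _) hsq]
    congr 1
    refine lintegral_congr fun z => ?_
    rw [← enorm_eq_nnnorm, Real.enorm_eq_ofReal_abs, ← ENNReal.ofReal_pow (abs_nonneg _), sq_abs]
  rw [h1, Real.sqrt_eq_rpow, ENNReal.toReal_rpow, eLpNorm_two_eq]

lemma eLpNorm_const_mul' (c : ℝ) (hc : 0 ≤ c) (h : Z → ℝ) (μ : Measure Z) :
    eLpNorm (fun z => c * h z) 2 μ = ENNReal.ofReal c * eLpNorm h 2 μ := by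
  rw [show (fun z => c * h z) = c • h from rfl, eLpNorm_const_smul]
  rw [← Real.enorm_eq_ofReal hc]

lemma mix_eLpNorm_bound [IsProbabilityMeasure ω] {a b : ℝ} (ha : 0 ≤ a) (hb : 0 ≤ b)
    {A B : Z → ℝ} (hAm : AEStronglyMeasurable A ω) (hBm : AEStronglyMeasurable B ω)
    (hA : eLpNorm A 2 ω ≤ 1) (hB : eLpNorm B 2 ω ≤ 1) :
    eLpNorm (fun z => a * A z + b * B z) 2 ω ≤ ENNReal.ofReal (a + b) := by
  calc eLpNorm (fun z => a * A z + b * B z) 2 ω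
      ≤ eLpNorm (fun z => a * A z) 2 ω + eLpNorm (fun z => b * B z) 2 ω :=
        eLpNorm_add_le (hAm.const_mul a) (hBm.const_mul b) one_le_two
    _ = ENNReal.ofReal a * eLpNorm A 2 ω + ENNReal.ofReal b * eLpNorm B 2 ω := by
        rw [eLpNorm_const_mul' a ha, eLpNorm_const_mul' b hb]
    _ ≤ ENNReal.ofReal a * 1 + ENNReal.ofReal b * 1 := by
        gcongr
    _ = ENNReal.ofReal (a + b) := by
        rw [mul_one, mul_one, ENNReal.ofReal_add ha hb]

/-- The key per-function decomposition: for `f ∈ L²(ω)` with unit second moment there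
are `A`, `B` with `‖A‖₂, ‖B‖₂ ≤ 1` such that for every `s ∈ (0,1)` the function
`z ↦ ∫ f d(P_s z)` agrees `ω`-a.e. with `s A + (1-s) B`. -/
lemma per_f [IsProbabilityMeasure ω] (P₁ P₀ : Kernel Z Z)
    [IsMarkovKernel P₁] [IsMarkovKernel P₀]
    (hb₁ : ω.bind (fun z => P₁ z) = ω) (hb₀ : ω.bind (fun z => P₀ z) = ω)
    (f : Z → ℝ) (hf : MemLp f 2 ω) (hvar : ∫ z, (f z) ^ 2 ∂ω = 1) :
    ∃ A B : Z → ℝ, StronglyMeasurable A ∧ StronglyMeasurable B ∧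
      eLpNorm A 2 ω ≤ 1 ∧ eLpNorm B 2 ω ≤ 1 ∧
      ∀ s : ℝ, 0 < s → s < 1 →
        (fun z => ∫ x, f x ∂(mixKernel P₁ P₀ s z))
          =ᵐ[ω] (fun z => s * A z + (1 - s) * B z) := by
  obtain ⟨g, hgm, hfg⟩ : ∃ g, StronglyMeasurable g ∧ f =ᵐ[ω] g :=
    ⟨hf.aestronglyMeasurable.mk f, hf.aestronglyMeasurable.stronglyMeasurable_mk,
      hf.aestronglyMeasurable.ae_eq_mk⟩
  have hgmeas : Measurable g := hgm.measurable
  -- measurable null superset of `{f ≠ g}`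
  obtain ⟨N, hNsub, hNm, hN0⟩ :=
    exists_measurable_superset_of_null (μ := ω) (s := {x | ¬ f x = g x}) (ae_iff.mp hfg)
  -- `g` is in `L²` and in `L¹`
  have hg2 : MemLp g 2 ω :=
    ⟨hgm.aestronglyMeasurable, by rw [eLpNorm_congr_ae hfg.symm]; exact hf.2⟩
  have hgint : Integrable g ω := memLp_one_iff_integrable.mp
    (hg2.mono_exponent (by norm_num))
  have hg1 : ∫⁻ x, (‖g x‖₊ : ℝ≥0∞) ∂ω ≠ ⊤ := hgint.2.ne
  -- the second moment of `g`
  have hEg : ∫⁻ x, ((‖g x‖₊ : ℝ≥0∞)) ^ 2 ∂ω = 1 := by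
    have hg2int : Integrable (fun x => g x ^ 2) ω := hg2.integrable_sq
    have hvg : ∫ z, (g z) ^ 2 ∂ω = 1 := by
      rw [← hvar]
      exact integral_congr_ae (hfg.mono fun x hx => by rw [hx]) |>.symm
    have h1 : ∫ z, (g z) ^ 2 ∂ω = (∫⁻ z, ((‖g z‖₊ : ℝ≥0∞)) ^ 2 ∂ω).toReal := by
      rw [integral_eq_lintegral_of_nonneg_ae
        (Filter.Eventually.of_forall fun z => sq_nonneg _) (by
          exact hgm.aestronglyMeasurable.pow 2)]
      congr 1
      refine lintegral_congr fun z => ?_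
      rw [← enorm_eq_nnnorm, Real.enorm_eq_ofReal_abs, ← ENNReal.ofReal_pow (abs_nonneg _), sq_abs]
    have hfin : ∫⁻ z, ((‖g z‖₊ : ℝ≥0∞)) ^ 2 ∂ω ≠ ⊤ := by
      have := hg2int.2
      simp only [HasFiniteIntegral] at this
      have heq : ∀ z : Z, ‖g z ^ 2‖ₑ = ((‖g z‖₊ : ℝ≥0∞)) ^ 2 := by
        intro z
        rw [Real.enorm_eq_ofReal_abs, ← enorm_eq_nnnorm, Real.enorm_eq_ofReal_abs,
          ← ENNReal.ofReal_pow (abs_nonneg _), sq_abs, abs_pow, sq_abs]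
      rw [show (∫⁻ z, ‖g z ^ 2‖ₑ ∂ω) = ∫⁻ z, ((‖g z‖₊ : ℝ≥0∞)) ^ 2 ∂ω from
        lintegral_congr heq] at this
      exact this.ne
    rw [h1] at hvg
    rw [← ENNReal.ofReal_toReal hfin, hvg, ENNReal.ofReal_one]
  -- the two component functions
  refine ⟨fun z => ∫ x, g x ∂(P₁ z), fun z => ∫ x, g x ∂(P₀ z), ?_, ?_, ?_, ?_, ?_⟩
  · exact StronglyMeasurable.integral_kernel_prod_right
      (f := fun (_ : Z) x => g x) (hgm.comp_measurable measurable_snd)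
  · exact StronglyMeasurable.integral_kernel_prod_right
      (f := fun (_ : Z) x => g x) (hgm.comp_measurable measurable_snd)
  · rw [eLpNorm_two_eq]
    calc (∫⁻ z, ((‖∫ x, g x ∂(P₁ z)‖₊ : ℝ≥0∞)) ^ 2 ∂ω) ^ (1 / 2 : ℝ)
        ≤ (∫⁻ x, ((‖g x‖₊ : ℝ≥0∞)) ^ 2 ∂ω) ^ (1 / 2 : ℝ) :=
          ENNReal.rpow_le_rpow (jensen_sq ω P₁ hb₁ hgmeas) (by norm_num)
      _ = 1 := by rw [hEg, ENNReal.one_rpow]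
  · rw [eLpNorm_two_eq]
    calc (∫⁻ z, ((‖∫ x, g x ∂(P₀ z)‖₊ : ℝ≥0∞)) ^ 2 ∂ω) ^ (1 / 2 : ℝ)
        ≤ (∫⁻ x, ((‖g x‖₊ : ℝ≥0∞)) ^ 2 ∂ω) ^ (1 / 2 : ℝ) :=
          ENNReal.rpow_le_rpow (jensen_sq ω P₀ hb₀ hgmeas) (by norm_num)
      _ = 1 := by rw [hEg, ENNReal.one_rpow]
  · intro s hs hs1
    have hPN₁ : ∀ᵐ z ∂ω, P₁ z N = 0 := stat_null ω P₁ hb₁ hNm hN0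
    have hPN₀ : ∀ᵐ z ∂ω, P₀ z N = 0 := stat_null ω P₀ hb₀ hNm hN0
    have hInt₁ : ∀ᵐ z ∂ω, Integrable g (P₁ z) := stat_integrable ω P₁ hb₁ hgmeas hg1
    have hInt₀ : ∀ᵐ z ∂ω, Integrable g (P₀ z) := stat_integrable ω P₀ hb₀ hgmeas hg1
    filter_upwards [hPN₁, hPN₀, hInt₁, hInt₀] with z h1 h0 hi1 hi0
    have hmixN : mixKernel P₁ P₀ s z N = 0 := by
      rw [mixKernel_apply_set, h1, h0]; simp
    have hfg' : f =ᵐ[mixKernel P₁ P₀ s z] g := by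
      rw [Filter.EventuallyEq, ae_iff]
      exact measure_mono_null hNsub hmixN
    have hi1' : Integrable g (ENNReal.ofReal s • P₁ z) :=
      (integrable_smul_measure (by simp [ENNReal.ofReal_eq_zero]; linarith)
        ENNReal.ofReal_ne_top).mpr hi1
    have hi0' : Integrable g (ENNReal.ofReal (1 - s) • P₀ z) :=
      (integrable_smul_measure (by simp [ENNReal.ofReal_eq_zero]; linarith)
        ENNReal.ofReal_ne_top).mpr hi0
    calc ∫ x, f x ∂(mixKernel P₁ P₀ s z)
        = ∫ x, g x ∂(mixKernel P₁ P₀ s z) := integral_congr_ae hfg'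
      _ = ∫ x, g x ∂(ENNReal.ofReal s • P₁ z)
            + ∫ x, g x ∂(ENNReal.ofReal (1 - s) • P₀ z) := by
          rw [show mixKernel P₁ P₀ s z
            = ENNReal.ofReal s • P₁ z + ENNReal.ofReal (1 - s) • P₀ z from rfl]
          exact integral_add_measure hi1' hi0'
      _ = s * (∫ x, g x ∂(P₁ z)) + (1 - s) * (∫ x, g x ∂(P₀ z)) := by
          rw [integral_smul_measure, integral_smul_measure,
            ENNReal.toReal_ofReal hs.le, ENNReal.toReal_ofReal (by linarith),
            smul_eq_mul, smul_eq_mul]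

/-- Stationarity of `ω` for both components, from stationarity for all mixtures. -/
lemma bind_components [IsProbabilityMeasure ω] (P₁ P₀ : Kernel Z Z)
    [IsMarkovKernel P₁] [IsMarkovKernel P₀]
    (hbind : ∀ r : ℝ, 0 < r → r < 1 → ω.bind (fun z => mixKernel P₁ P₀ r z) = ω) :
    ω.bind (fun z => P₁ z) = ω ∧ ω.bind (fun z => P₀ z) = ω := by
  have hmeasmix : ∀ r : ℝ, Measurable (fun z => mixKernel P₁ P₀ r z) := by
    intro r
    rw [← mixK_eq]
    exact (mixK P₁ P₀ r).measurable
  have key : ∀ A : Set Z, MeasurableSet A → ∀ r : ℝ, 0 < r → r < 1 →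
      ENNReal.ofReal r * ∫⁻ z, P₁ z A ∂ω
        + ENNReal.ofReal (1 - r) * ∫⁻ z, P₀ z A ∂ω = ω A := by
    intro A hA r h h1
    calc ENNReal.ofReal r * ∫⁻ z, P₁ z A ∂ω
          + ENNReal.ofReal (1 - r) * ∫⁻ z, P₀ z A ∂ω
        = ∫⁻ z, mixKernel P₁ P₀ r z A ∂ω := by
          simp only [mixKernel_apply_set]
          rw [lintegral_add_left ((P₁.measurable_coe hA).const_mul _),
            lintegral_const_mul _ (P₁.measurable_coe hA),
            lintegral_const_mul _ (P₀.measurable_coe hA)]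
      _ = (ω.bind (fun z => mixKernel P₁ P₀ r z)) A :=
          (Measure.bind_apply hA (hmeasmix r).aemeasurable).symm
      _ = ω A := by rw [hbind r h h1]
  have main : ∀ A : Set Z, MeasurableSet A →
      (∫⁻ z, P₁ z A ∂ω = ω A ∧ ∫⁻ z, P₀ z A ∂ω = ω A) := by
    intro A hA
    set u := ∫⁻ z, P₁ z A ∂ω with hu
    set v := ∫⁻ z, P₀ z A ∂ω with hv
    have e1 := key A hA (1/2) (by norm_num) (by norm_num)
    have e2 := key A hA (3/4) (by norm_num) (by norm_num)
    rw [← hu, ← hv] at e1 e2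
    have hu_ne : u ≠ ⊤ := by
      intro h
      rw [h, ENNReal.mul_top (by norm_num [ENNReal.ofReal_eq_zero])] at e1
      simp only [top_add] at e1
      exact (measure_ne_top ω A) e1.symm
    have hv_ne : v ≠ ⊤ := by
      intro h
      rw [h, ENNReal.mul_top (by norm_num [ENNReal.ofReal_eq_zero])] at e1
      simp only [add_top] at e1
      exact (measure_ne_top ω A) e1.symm
    have hx1 : (ENNReal.ofReal (1/2 : ℝ) * u).toReal = (1/2 : ℝ) * u.toReal := by
      rw [ENNReal.toReal_mul, ENNReal.toReal_ofReal (by norm_num)]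
    have e1' : (1/2 : ℝ) * u.toReal + (1/2 : ℝ) * v.toReal = (ω A).toReal := by
      have := congrArg ENNReal.toReal e1
      rw [ENNReal.toReal_add (by
          exact ENNReal.mul_ne_top ENNReal.ofReal_ne_top hu_ne) (by
          exact ENNReal.mul_ne_top ENNReal.ofReal_ne_top hv_ne),
        ENNReal.toReal_mul, ENNReal.toReal_mul,
        ENNReal.toReal_ofReal (by norm_num), ENNReal.toReal_ofReal (by norm_num)] at this
      convert this using 2 <;> norm_num
    have e2' : (3/4 : ℝ) * u.toReal + (1/4 : ℝ) * v.toReal = (ω A).toReal := by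
      have := congrArg ENNReal.toReal e2
      rw [ENNReal.toReal_add (by
          exact ENNReal.mul_ne_top ENNReal.ofReal_ne_top hu_ne) (by
          exact ENNReal.mul_ne_top ENNReal.ofReal_ne_top hv_ne),
        ENNReal.toReal_mul, ENNReal.toReal_mul,
        ENNReal.toReal_ofReal (by norm_num), ENNReal.toReal_ofReal (by norm_num)] at this
      convert this using 2 <;> norm_num
    constructor
    · exact (ENNReal.toReal_eq_toReal_iff' hu_ne (measure_ne_top ω A)).mp (by linarith)
    · exact (ENNReal.toReal_eq_toReal_iff' hv_ne (measure_ne_top ω A)).mp (by linarith)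
  constructor
  · refine Measure.ext fun A hA => ?_
    rw [Measure.bind_apply hA P₁.measurable.aemeasurable]
    exact (main A hA).1
  · refine Measure.ext fun A hA => ?_
    rw [Measure.bind_apply hA P₀.measurable.aemeasurable]
    exact (main A hA).2

end Aux

/-- If every mixture `P_r = rP₁ + (1-r)P₀`, `r ∈ (0,1)`, is reversible with respect
to `ω`, and `‖P_{r₀}‖_ω < 1` for some `r₀ ∈ (0,1)`, then `‖P_r‖_ω < 1` for every
`r ∈ (0,1)`. -/
theorem stmt_4 {Z : Type*} [MeasurableSpace Z]
    (ω : Measure Z) [IsProbabilityMeasure ω]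
    (P₁ P₀ : ProbabilityTheory.Kernel Z Z)
    [ProbabilityTheory.IsMarkovKernel P₁] [ProbabilityTheory.IsMarkovKernel P₀]
    (hrev : ∀ r : ℝ, 0 < r → r < 1 → ∀ A B : Set Z, MeasurableSet A →
      MeasurableSet B →
      ∫⁻ z in A, mixKernel P₁ P₀ r z B ∂ω = ∫⁻ z in B, mixKernel P₁ P₀ r z A ∂ω)
    (r₀ : ℝ) (hr₀ : 0 < r₀) (hr₀1 : r₀ < 1)
    (h₀ : kernelNorm (mixKernel P₁ P₀ r₀) ω < 1) :
    ∀ r : ℝ, 0 < r → r < 1 → kernelNorm (mixKernel P₁ P₀ r) ω < 1 := by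
  have hmeasmix : ∀ r : ℝ, Measurable (fun z => mixKernel P₁ P₀ r z) := by
    intro r
    rw [← mixK_eq]
    exact (mixK P₁ P₀ r).measurable
  -- `ω` is stationary for each mixture
  have hbind : ∀ r : ℝ, 0 < r → r < 1 →
      ω.bind (fun z => mixKernel P₁ P₀ r z) = ω := by
    intro r h h1
    refine Measure.ext fun A hA => ?_
    rw [Measure.bind_apply hA (hmeasmix r).aemeasurable]
    have hr' := hrev r h h1 A Set.univ hA MeasurableSet.univ
    rw [setLIntegral_univ] at hr'
    rw [← hr']
    have huniv : ∀ z, mixKernel P₁ P₀ r z Set.univ = 1 :=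
      mixKernel_univ P₁ P₀ h.le h1.le
    simp only [huniv]
    exact setLIntegral_one A
  obtain ⟨hb₁, hb₀⟩ := bind_components ω P₁ P₀ hbind
  intro r hr hr1
  -- the mixing coefficient
  set c : ℝ := min (r / r₀) ((1 - r) / (1 - r₀)) with hc_def
  have hc0 : 0 < c := lt_min (div_pos hr hr₀) (div_pos (by linarith) (by linarith))
  have hcr : c * r₀ ≤ r := by
    have := min_le_left (r / r₀) ((1 - r) / (1 - r₀))
    calc c * r₀ ≤ (r / r₀) * r₀ := by
          apply mul_le_mul_of_nonneg_right this hr₀.le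
      _ = r := div_mul_cancel₀ r (ne_of_gt hr₀)
  have hcr' : c * (1 - r₀) ≤ 1 - r := by
    have := min_le_right (r / r₀) ((1 - r) / (1 - r₀))
    calc c * (1 - r₀) ≤ ((1 - r) / (1 - r₀)) * (1 - r₀) := by
          apply mul_le_mul_of_nonneg_right this (by linarith)
      _ = 1 - r := div_mul_cancel₀ (1 - r) (by linarith : (0:ℝ) < 1 - r₀).ne'
  set α : ℝ := r - c * r₀ with hα_def
  set β : ℝ := (1 - r) - c * (1 - r₀) with hβ_def
  have hα : 0 ≤ α := by simp only [hα_def]; linarith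
  have hβ : 0 ≤ β := by simp only [hβ_def]; linarith
  have hsum : α + β = 1 - c := by simp only [hα_def, hβ_def]; ring
  have hc1 : c ≤ 1 := by linarith
  -- the two sup-sets
  set S : Set ℝ := {t : ℝ | ∃ f : Z → ℝ,
    MemLp f 2 ω ∧ (∫ z, f z ∂ω) = 0 ∧ (∫ z, (f z)^2 ∂ω) = 1 ∧
    t = Real.sqrt (∫ z, (∫ x, f x ∂(mixKernel P₁ P₀ r z))^2 ∂ω)} with hS_def
  set S₀ : Set ℝ := {t : ℝ | ∃ f : Z → ℝ,
    MemLp f 2 ω ∧ (∫ z, f z ∂ω) = 0 ∧ (∫ z, (f z)^2 ∂ω) = 1 ∧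
    t = Real.sqrt (∫ z, (∫ x, f x ∂(mixKernel P₁ P₀ r₀ z))^2 ∂ω)} with hS₀_def
  have hkernelNorm : kernelNorm (mixKernel P₁ P₀ r) ω = sSup S := rfl
  have hkernelNorm₀ : kernelNorm (mixKernel P₁ P₀ r₀) ω = sSup S₀ := rfl
  -- bounded above by 1
  have hbdd₀ : ∀ t ∈ S₀, t ≤ 1 := by
    rintro t ⟨f, hf, hmean, hvar, rfl⟩
    obtain ⟨A, B, hAsm, hBsm, hA1, hB1, hae⟩ := per_f ω P₁ P₀ hb₁ hb₀ f hf hvar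
    have h1 := hae r₀ hr₀ hr₀1
    have heq : Real.sqrt (∫ z, (∫ x, f x ∂(mixKernel P₁ P₀ r₀ z))^2 ∂ω)
        = (eLpNorm (fun z => r₀ * A z + (1 - r₀) * B z) 2 ω).toReal := by
      rw [show (∫ z, (∫ x, f x ∂(mixKernel P₁ P₀ r₀ z))^2 ∂ω)
          = ∫ z, (r₀ * A z + (1 - r₀) * B z)^2 ∂ω from
        integral_congr_ae (by filter_upwards [h1] with z hz; rw [hz])]
      exact sqrt_integral_sq_eq _ _
        ((hAsm.const_mul r₀).add (hBsm.const_mul (1 - r₀))).aestronglyMeasurable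
    rw [heq]
    have hle : eLpNorm (fun z => r₀ * A z + (1 - r₀) * B z) 2 ω
        ≤ ENNReal.ofReal (r₀ + (1 - r₀)) :=
      mix_eLpNorm_bound ω hr₀.le (by linarith) hAsm.aestronglyMeasurable
        hBsm.aestronglyMeasurable hA1 hB1
    have : eLpNorm (fun z => r₀ * A z + (1 - r₀) * B z) 2 ω ≤ 1 := by
      simpa using hle
    calc (eLpNorm (fun z => r₀ * A z + (1 - r₀) * B z) 2 ω).toReal
        ≤ (1 : ℝ≥0∞).toReal := ENNReal.toReal_mono ENNReal.one_ne_top this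
      _ = 1 := ENNReal.toReal_one
  have hBddAbove₀ : BddAbove S₀ := ⟨1, fun t ht => hbdd₀ t ht⟩
  -- main bound for each element of `S`
  have hmain : ∀ t ∈ S, t ≤ c * kernelNorm (mixKernel P₁ P₀ r₀) ω + (1 - c) := by
    rintro t ⟨f, hf, hmean, hvar, rfl⟩
    obtain ⟨A, B, hAsm, hBsm, hA1, hB1, hae⟩ := per_f ω P₁ P₀ hb₁ hb₀ f hf hvar
    have h1 := hae r hr hr1
    have h2 := hae r₀ hr₀ hr₀1
    -- the `r₀`-value
    have heq₀ : Real.sqrt (∫ z, (∫ x, f x ∂(mixKernel P₁ P₀ r₀ z))^2 ∂ω)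
        = (eLpNorm (fun z => r₀ * A z + (1 - r₀) * B z) 2 ω).toReal := by
      rw [show (∫ z, (∫ x, f x ∂(mixKernel P₁ P₀ r₀ z))^2 ∂ω)
          = ∫ z, (r₀ * A z + (1 - r₀) * B z)^2 ∂ω from
        integral_congr_ae (by filter_upwards [h2] with z hz; rw [hz])]
      exact sqrt_integral_sq_eq _ _
        ((hAsm.const_mul r₀).add (hBsm.const_mul (1 - r₀))).aestronglyMeasurable
    have ht₀mem : Real.sqrt (∫ z, (∫ x, f x ∂(mixKernel P₁ P₀ r₀ z))^2 ∂ω) ∈ S₀ :=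
      ⟨f, hf, hmean, hvar, rfl⟩
    have ht₀le : (eLpNorm (fun z => r₀ * A z + (1 - r₀) * B z) 2 ω).toReal ≤ kernelNorm (mixKernel P₁ P₀ r₀) ω := by
      rw [← heq₀, hkernelNorm₀]
      exact le_csSup hBddAbove₀ ht₀mem
    -- the `r`-value
    have heq : Real.sqrt (∫ z, (∫ x, f x ∂(mixKernel P₁ P₀ r z))^2 ∂ω)
        = (eLpNorm (fun z => r * A z + (1 - r) * B z) 2 ω).toReal := by
      rw [show (∫ z, (∫ x, f x ∂(mixKernel P₁ P₀ r z))^2 ∂ω)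
          = ∫ z, (r * A z + (1 - r) * B z)^2 ∂ω from
        integral_congr_ae (by filter_upwards [h1] with z hz; rw [hz])]
      exact sqrt_integral_sq_eq _ _
        ((hAsm.const_mul r).add (hBsm.const_mul (1 - r))).aestronglyMeasurable
    rw [heq]
    -- key decomposition
    have hdecomp : (fun z => r * A z + (1 - r) * B z)
        = fun z => c * (r₀ * A z + (1 - r₀) * B z) + (α * A z + β * B z) := by
      funext z
      simp only [hα_def, hβ_def]
      ring
    have hH1 : eLpNorm (fun z => r₀ * A z + (1 - r₀) * B z) 2 ω ≤ 1 := by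
      have hle := mix_eLpNorm_bound ω hr₀.le (by linarith : (0:ℝ) ≤ 1 - r₀)
        hAsm.aestronglyMeasurable hBsm.aestronglyMeasurable hA1 hB1
      simpa using hle
    have hkey : eLpNorm (fun z => r * A z + (1 - r) * B z) 2 ω
        ≤ ENNReal.ofReal c * eLpNorm (fun z => r₀ * A z + (1 - r₀) * B z) 2 ω
          + ENNReal.ofReal (1 - c) := by
      rw [hdecomp]
      calc eLpNorm
            (fun z => c * (r₀ * A z + (1 - r₀) * B z) + (α * A z + β * B z)) 2 ω
          ≤ eLpNorm (fun z => c * (r₀ * A z + (1 - r₀) * B z)) 2 ω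
            + eLpNorm (fun z => α * A z + β * B z) 2 ω :=
            eLpNorm_add_le
              (((hAsm.const_mul r₀).add (hBsm.const_mul (1 - r₀))).const_mul
                c).aestronglyMeasurable
              ((hAsm.const_mul α).add (hBsm.const_mul β)).aestronglyMeasurable
              one_le_two
        _ ≤ ENNReal.ofReal c * eLpNorm (fun z => r₀ * A z + (1 - r₀) * B z) 2 ω
            + ENNReal.ofReal (α + β) := by
            rw [eLpNorm_const_mul' c hc0.le]
            exact add_le_add le_rfl
              (mix_eLpNorm_bound ω hα hβ hAsm.aestronglyMeasurable
                hBsm.aestronglyMeasurable hA1 hB1)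
        _ = ENNReal.ofReal c * eLpNorm (fun z => r₀ * A z + (1 - r₀) * B z) 2 ω
            + ENNReal.ofReal (1 - c) := by rw [hsum]
    have hrhs_ne : ENNReal.ofReal c * eLpNorm (fun z => r₀ * A z + (1 - r₀) * B z) 2 ω
        + ENNReal.ofReal (1 - c) ≠ ⊤ := by
      apply ENNReal.add_ne_top.mpr
      constructor
      · exact ENNReal.mul_ne_top ENNReal.ofReal_ne_top
          (lt_of_le_of_lt hH1 ENNReal.one_lt_top).ne
      · exact ENNReal.ofReal_ne_top
    calc (eLpNorm (fun z => r * A z + (1 - r) * B z) 2 ω).toReal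
        ≤ (ENNReal.ofReal c * eLpNorm (fun z => r₀ * A z + (1 - r₀) * B z) 2 ω
            + ENNReal.ofReal (1 - c)).toReal := ENNReal.toReal_mono hrhs_ne hkey
      _ = c * (eLpNorm (fun z => r₀ * A z + (1 - r₀) * B z) 2 ω).toReal + (1 - c) := by
          rw [ENNReal.toReal_add (ENNReal.mul_ne_top ENNReal.ofReal_ne_top
              (lt_of_le_of_lt hH1 ENNReal.one_lt_top).ne) ENNReal.ofReal_ne_top,
            ENNReal.toReal_mul, ENNReal.toReal_ofReal hc0.le,
            ENNReal.toReal_ofReal (by linarith)]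
      _ ≤ c * kernelNorm (mixKernel P₁ P₀ r₀) ω + (1 - c) := by
          have := mul_le_mul_of_nonneg_left ht₀le hc0.le
          linarith
  -- conclusion
  rw [hkernelNorm]
  rcases S.eq_empty_or_nonempty with hS | hSne
  · rw [hS, Real.sSup_empty]; norm_num
  · have hfinal : c * kernelNorm (mixKernel P₁ P₀ r₀) ω + (1 - c) < 1 := by nlinarith [hc0, h₀]
    exact lt_of_le_of_lt (csSup_le hSne hmain) hfinal
end

section
/- Let r ∈ (0,1) and ρ_D ∈ [0,1], and define ρ_R = (1 + √(1 − 4r(1−r)(1 − ρ_D)))/2. Then ρ_R ≥ ρ_D^{r(1−r)}. -/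
/-- For `r ∈ (0,1)` and `ρ_D ∈ [0,1]`, with
`ρ_R = (1 + √(1 - 4r(1-r)(1-ρ_D)))/2`, we have `ρ_R ≥ ρ_D ^ (r(1-r))`. -/
theorem stmt_9 (r ρD : ℝ) (hr : 0 < r) (hr1 : r < 1) (hρD0 : 0 ≤ ρD) (hρD1 : ρD ≤ 1) :
    ρD ^ (r * (1 - r)) ≤ (1 + Real.sqrt (1 - 4 * r * (1 - r) * (1 - ρD))) / 2 := by
  set t := r * (1 - r) with ht
  have ht0 : 0 < t := mul_pos hr (by linarith)
  have ht4 : 4 * t ≤ 1 := by rw [ht]; nlinarith [sq_nonneg (2*r - 1)]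
  set s := 1 - 4 * r * (1 - r) * (1 - ρD) with hs
  have hs0 : 0 ≤ s := by nlinarith
  -- Bernoulli / weighted AM-GM : ρD^(4t) ≤ s
  have hB : ρD ^ (4 * t) ≤ s := by
    have h := Real.geom_mean_le_arith_mean2_weighted
      (w₁ := 1 - 4 * t) (w₂ := 4 * t) (p₁ := 1) (p₂ := ρD)
      (by linarith) (by linarith) zero_le_one hρD0 (by ring)
    simp only [Real.one_rpow, one_mul, mul_one] at h
    calc ρD ^ (4 * t) = 1 ^ (1 - 4 * t) * ρD ^ (4 * t) := by
          rw [Real.one_rpow, one_mul]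
      _ ≤ (1 - 4 * t) * 1 + 4 * t * ρD := by
          simpa using Real.geom_mean_le_arith_mean2_weighted
            (by linarith) (by linarith) zero_le_one hρD0 (by ring)
      _ = s := by rw [hs, ht]; ring
  have key : ρD ^ t ≤ s ^ ((1:ℝ)/4) := by
    have : ρD ^ t = (ρD ^ (4 * t)) ^ ((1:ℝ)/4) := by
      rw [← Real.rpow_mul hρD0]; ring_nf
    rw [this]
    exact Real.rpow_le_rpow (Real.rpow_nonneg hρD0 _) hB (by norm_num)
  refine key.trans ?_
  have hsq : s ^ ((1:ℝ)/4) = Real.sqrt (Real.sqrt s) := by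
    rw [Real.sqrt_eq_rpow, Real.sqrt_eq_rpow, ← Real.rpow_mul hs0]
    norm_num
  rw [hsq]
  have hx0 : 0 ≤ Real.sqrt s := Real.sqrt_nonneg s
  have : Real.sqrt (Real.sqrt s) ≤ (1 + Real.sqrt s) / 2 := by
    have h1 : Real.sqrt s ≤ ((1 + Real.sqrt s) / 2) ^ 2 := by nlinarith [sq_nonneg (1 - Real.sqrt s)]
    calc Real.sqrt (Real.sqrt s) ≤ Real.sqrt (((1 + Real.sqrt s) / 2) ^ 2) :=
          Real.sqrt_le_sqrt h1
      _ = (1 + Real.sqrt s) / 2 := Real.sqrt_sq (by positivity)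
  exact this
end

section
/- Let ρ_D ∈ [0,1], r ∈ (0,1), ρ_R = (1+√(1−4r(1−r)(1−ρ_D)))/2, and suppose ρ_R^{k*} = ρ_D for some k* > 0 (with ρ_D ∈ (0,1)). Then k* ≥ 1/(r(1−r)). -/
set_option maxHeartbeats 1000000 in
/-- If `ρ_D ∈ (0,1)`, `r ∈ (0,1)`, `ρ_R = (1+√(1-4r(1-r)(1-ρ_D)))/2` and
`ρ_R ^ k* = ρ_D` for some `k* > 0`, then `k* ≥ 1/(r(1-r))`. -/
theorem stmt_11 (r ρD ρR k : ℝ) (hr : 0 < r) (hr1 : r < 1)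
    (hρD0 : 0 < ρD) (hρD1 : ρD < 1)
    (hρR : ρR = (1 + Real.sqrt (1 - 4 * r * (1 - r) * (1 - ρD))) / 2)
    (hk : 0 < k) (hpow : ρR ^ k = ρD) :
    1 / (r * (1 - r)) ≤ k := by
  have ha : 0 < r * (1 - r) := mul_pos hr (by linarith)
  set a : ℝ := r * (1 - r) with ha_def
  have ha4 : 4 * a ≤ 1 := by nlinarith [sq_nonneg (2 * r - 1)]
  set u : ℝ := ρD ^ a with hu_def
  have hu0 : 0 < u := Real.rpow_pos_of_pos hρD0 a
  have hu1 : u < 1 := Real.rpow_lt_one hρD0.le hρD1 ha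
  -- key inequality : ρD ^ a ≤ ρR
  have key : u ≤ ρR := by
    by_cases hc : u ≤ 1 / 2
    · have hs := Real.sqrt_nonneg (1 - 4 * r * (1 - r) * (1 - ρD))
      rw [hρR]; linarith
    · push_neg at hc
      set b : ℝ := 1 / a with hb_def
      have hab : a * b = 1 := mul_one_div_cancel ha.ne'
      have hb4 : (4 : ℝ) ≤ b := by rw [hb_def, le_div_iff₀ ha]; linarith
      -- express ρD = u ^ b
      have hyu : ρD = u ^ b := by
        rw [hu_def, ← Real.rpow_mul hρD0.le, hb_def, mul_one_div_cancel ha.ne',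
          Real.rpow_one]
      set L : ℝ := Real.log u with hL_def
      -- tangent-line bound for the convex function b ↦ u ^ b at b = 4
      have hsplit : u ^ b = u ^ (4 : ℝ) * u ^ (b - 4) := by
        rw [← Real.rpow_add hu0]; ring_nf
      have h4nat : u ^ (4 : ℝ) = u ^ (4 : ℕ) := by
        rw [show (4 : ℝ) = ((4 : ℕ) : ℝ) by norm_num, Real.rpow_natCast]
      have hexp : 1 + L * (b - 4) ≤ u ^ (b - 4) := by
        rw [Real.rpow_def_of_pos hu0]
        linarith [Real.add_one_le_exp (L * (b - 4))]
      have hρ : u ^ (4 : ℕ) * (1 + L * (b - 4)) ≤ ρD := by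
        calc u ^ (4 : ℕ) * (1 + L * (b - 4))
            ≤ u ^ (4 : ℕ) * u ^ (b - 4) :=
              mul_le_mul_of_nonneg_left hexp (pow_nonneg hu0.le 4)
          _ = u ^ b := by rw [← h4nat, ← hsplit]
          _ = ρD := hyu.symm
      -- lower bound for log : u * L ≥ u - 1
      have hL : u - 1 ≤ u * L := by
        have h := Real.log_le_sub_one_of_pos (inv_pos.mpr hu0)
        rw [Real.log_inv] at h
        have h2 : u * (u⁻¹ - 1) ≥ u * (-L) :=
          mul_le_mul_of_nonneg_left h hu0.le
        have h3 : u * (u⁻¹ - 1) = 1 - u := by field_simp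
        nlinarith
      -- main estimate : 1 - ρD ≤ b * (u * (1 - u))
      have hint1 : 0 ≤ ((b - 4) * u ^ (3 : ℕ)) * (u * L - (u - 1)) :=
        mul_nonneg (mul_nonneg (by linarith) (pow_nonneg hu0.le 3))
          (by linarith)
      have hint2 : 0 ≤ (1 - u) ^ 2 * (u ^ 2 + 2 * u - 1) :=
        mul_nonneg (sq_nonneg _) (by nlinarith)
      have hint3 : 0 ≤ (b - 4) * (u * (1 - u) * (1 - u ^ 2)) :=
        mul_nonneg (by linarith)
          (mul_nonneg (mul_nonneg hu0.le (by linarith)) (by nlinarith))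
      have hmain : 1 - ρD ≤ b * (u * (1 - u)) := by
        nlinarith [hρ, hint1, hint2, hint3]
      have hkey2 : a * (1 - ρD) ≤ u * (1 - u) := by
        calc a * (1 - ρD) ≤ a * (b * (u * (1 - u))) :=
              mul_le_mul_of_nonneg_left hmain ha.le
          _ = (a * b) * (u * (1 - u)) := by ring
          _ = u * (1 - u) := by rw [hab, one_mul]
      have hsq : (2 * u - 1) ^ 2 ≤ 1 - 4 * r * (1 - r) * (1 - ρD) := by
        have h4a : 4 * r * (1 - r) * (1 - ρD) = 4 * (a * (1 - ρD)) := by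
          rw [ha_def]; ring
        rw [h4a]; linarith [hkey2]
      have hs := Real.sqrt_le_sqrt hsq
      rw [Real.sqrt_sq (by linarith : (0 : ℝ) ≤ 2 * u - 1)] at hs
      rw [hρR]; linarith
  -- conclude
  have h1 : ρD ^ (a * k) ≤ ρD ^ (1 : ℝ) := by
    calc ρD ^ (a * k) = (ρD ^ a) ^ k := Real.rpow_mul hρD0.le a k
      _ ≤ ρR ^ k := Real.rpow_le_rpow hu0.le key hk.le
      _ = ρD := hpow
      _ = ρD ^ (1 : ℝ) := (Real.rpow_one ρD).symm
  have h2 : 1 ≤ a * k :=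
    (Real.rpow_le_rpow_left_iff_of_base_lt_one hρD0 hρD1).mp h1
  rw [div_le_iff₀ ha]
  linarith [mul_comm a k]
end

section
/- Let Q₁ : K_Y → K_X and Q₂ : K_X → K_Y be bounded linear maps between Hilbert spaces with ‖Q₁‖ ≤ 1 and ‖Q₂‖ ≤ 1, set P_X = Q₁Q₂ and P_Y = Q₂Q₁, and assume ‖P_X‖ ≤ γ̄² and ‖P_Y‖ ≤ γ̄² for some γ̄ ∈ [0,1]. Fix r ∈ (0,1) and ρ ∈ (max{r, 1−r}, 1]. Suppose (g_n) ⊂ K_X and (h_n) ⊂ K_Y satisfy (1 − r − ρ) g_n + (1−r) Q₁ h_n → 0 and (r − ρ) h_n + r Q₂ g_n → 0, with ‖g_n‖ + ‖h_n‖ ≥ 1 for all n. Then (ρ + r − 1)(ρ − r) ≤ r(1−r) γ̄². -/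
open RealInnerProductSpace Filter

lemma aux_vanish {KX KY : Type*} [NormedAddCommGroup KX] [NormedSpace ℝ KX]
    [NormedAddCommGroup KY] [NormedSpace ℝ KY]
    (Q₁ : KY →L[ℝ] KX) (Q₂ : KX →L[ℝ] KY) (a b c d K : ℝ)
    (hbd : 0 ≤ b * d) (hK : 0 ≤ K)
    (hPX : ∀ x, ‖Q₁ (Q₂ x)‖ ≤ K * ‖x‖)
    (hlt : b * d * K < c * a)
    (g : ℕ → KX) (h : ℕ → KY)
    (h1 : Tendsto (fun n => a • g n + b • Q₁ (h n)) atTop (nhds 0))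
    (h2 : Tendsto (fun n => c • h n + d • Q₂ (g n)) atTop (nhds 0)) :
    Tendsto (fun n => ‖g n‖) atTop (nhds 0) := by
  set w : ℕ → KX := fun n => (c * a) • g n - (b * d) • Q₁ (Q₂ (g n)) with hw
  have hQcont : Tendsto (fun n => Q₁ (c • h n + d • Q₂ (g n))) atTop (nhds 0) := by
    have := (Q₁.continuous.tendsto 0).comp h2
    simpa [Function.comp_def] using this
  have hwt : Tendsto w atTop (nhds 0) := by
    have := (h1.const_smul c).sub (hQcont.const_smul b)
    simp only [smul_zero, sub_zero] at this
    convert this using 2 with n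
    simp only [hw, map_add, map_smul, smul_add, smul_smul]
    module
  have key : ∀ n, ‖g n‖ ≤ ‖w n‖ / (c * a - b * d * K) := by
    intro n
    rw [le_div_iff₀ (by nlinarith [mul_nonneg hbd hK])]
    have h1 : (c*a) • g n = w n + (b*d) • Q₁ (Q₂ (g n)) := by simp [hw]
    have h2 : (c*a) * ‖g n‖ ≤ ‖w n‖ + (b*d) * (K * ‖g n‖) := by
      calc (c*a) * ‖g n‖ = ‖(c*a) • g n‖ := by
            rw [norm_smul, Real.norm_eq_abs, abs_of_pos (by nlinarith [mul_nonneg hbd hK])]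
      _ ≤ ‖w n‖ + ‖(b*d) • Q₁ (Q₂ (g n))‖ := by rw [h1]; exact norm_add_le _ _
      _ ≤ ‖w n‖ + (b*d) * (K * ‖g n‖) := by
            rw [norm_smul, Real.norm_eq_abs, abs_of_nonneg hbd]
            exact add_le_add (le_refl _) (mul_le_mul_of_nonneg_left (hPX _) hbd)
    nlinarith
  have hnorm : Tendsto (fun n => ‖w n‖ / (c * a - b * d * K)) atTop (nhds 0) := by
    have := (hwt.norm).div_const (c * a - b * d * K)
    simpa using this
  exact squeeze_zero (fun n => norm_nonneg _) key hnorm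

/-- The abstract operator-theoretic heart of the upper bound in the main theorem:
with `Q₁ : K_Y →L K_X`, `Q₂ : K_X →L K_Y` of norm at most 1, `P_X = Q₁Q₂` and
`P_Y = Q₂Q₁` of norm at most `γ̄²`, `r ∈ (0,1)`, `ρ ∈ (max{r,1-r}, 1]`, and sequences
`g_n`, `h_n` with `(1-r-ρ)g_n + (1-r)Q₁h_n → 0`, `(r-ρ)h_n + rQ₂g_n → 0` and
`‖g_n‖ + ‖h_n‖ ≥ 1`, we get `(ρ+r-1)(ρ-r) ≤ r(1-r)γ̄²`. -/
theorem stmt_14 {KX KY : Type*} [NormedAddCommGroup KX] [InnerProductSpace ℝ KX]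
    [CompleteSpace KX] [NormedAddCommGroup KY] [InnerProductSpace ℝ KY]
    [CompleteSpace KY]
    (Q₁ : KY →L[ℝ] KX) (Q₂ : KX →L[ℝ] KY)
    (hQ₁ : ‖Q₁‖ ≤ 1) (hQ₂ : ‖Q₂‖ ≤ 1)
    (γ : ℝ) (hγ0 : 0 ≤ γ) (hγ1 : γ ≤ 1)
    (hPX : ‖Q₁.comp Q₂‖ ≤ γ^2) (hPY : ‖Q₂.comp Q₁‖ ≤ γ^2)
    (r ρ : ℝ) (hr : 0 < r) (hr1 : r < 1) (hρlb : max r (1 - r) < ρ) (hρub : ρ ≤ 1)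
    (g : ℕ → KX) (h : ℕ → KY)
    (hg : Tendsto (fun n => (1 - r - ρ) • g n + (1 - r) • Q₁ (h n)) atTop (nhds 0))
    (hh : Tendsto (fun n => (r - ρ) • h n + r • Q₂ (g n)) atTop (nhds 0))
    (hunit : ∀ n, 1 ≤ ‖g n‖ + ‖h n‖) :
    (ρ + r - 1) * (ρ - r) ≤ r * (1 - r) * γ^2 := by
  by_contra hcon
  push_neg at hcon
  have hρr : r < ρ := lt_of_le_of_lt (le_max_left _ _) hρlb
  have hρr' : 1 - r < ρ := lt_of_le_of_lt (le_max_right _ _) hρlb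
  have hK : 0 ≤ γ ^ 2 := sq_nonneg γ
  have hPXx : ∀ x : KX, ‖Q₁ (Q₂ x)‖ ≤ γ ^ 2 * ‖x‖ := fun x =>
    le_trans ((Q₁.comp Q₂).le_opNorm x) (mul_le_mul_of_nonneg_right hPX (norm_nonneg x))
  have hPYx : ∀ x : KY, ‖Q₂ (Q₁ x)‖ ≤ γ ^ 2 * ‖x‖ := fun x =>
    le_trans ((Q₂.comp Q₁).le_opNorm x) (mul_le_mul_of_nonneg_right hPY (norm_nonneg x))
  have hgn : Tendsto (fun n => ‖g n‖) atTop (nhds 0) :=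
    aux_vanish Q₁ Q₂ (1 - r - ρ) (1 - r) (r - ρ) r (γ ^ 2)
      (by nlinarith) hK hPXx (by nlinarith) g h hg hh
  have hhn : Tendsto (fun n => ‖h n‖) atTop (nhds 0) :=
    aux_vanish Q₂ Q₁ (r - ρ) r (1 - r - ρ) (1 - r) (γ ^ 2)
      (by nlinarith) hK hPYx (by nlinarith) h g hh hg
  have hsum : Tendsto (fun n => ‖g n‖ + ‖h n‖) atTop (nhds 0) := by
    simpa using hgn.add hhn
  have : (1 : ℝ) ≤ 0 := ge_of_tendsto' hsum hunit
  linarith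
end

section
/- Let Q₁ : K_Y → K_X and Q₂ : K_X → K_Y be bounded linear maps between Hilbert spaces, and define the 'random-scan' operator T on K_X × K_Y by T(g, h) = ((1−r)(g + Q₁h), r(Q₂g + h)) for fixed r ∈ (0,1). Suppose P_X = Q₁Q₂ is self-adjoint non-negative definite on K_X with ‖P_X‖ = γ̄² for some γ̄ ∈ (0,1). If (ĝ_n) is a sequence in K_X with ‖ĝ_n‖ = 1 and P_X ĝ_n − γ̄² ĝ_n → 0, and a = (2r−1+√(1−4r(1−r)(1−γ̄²)))/(2(1−r)γ̄²), then T(ĝ_n, aQ₂ĝ_n) − λ (ĝ_n, aQ₂ĝ_n) → 0 where λ = (1+√(1−4r(1−r)(1−γ̄²)))/2. -/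
open RealInnerProductSpace Filter

/-- The approximate-eigenvector construction for the random-scan operator
`T(g,h) = ((1-r)(g + Q₁h), r(Q₂g + h))`: if `P_X = Q₁Q₂` is self-adjoint
non-negative definite with `‖P_X‖ = γ̄²`, `γ̄ ∈ (0,1)`, and `gh_n` are unit vectors
with `P_X gh_n - γ̄² gh_n → 0`, then with
`a = (2r-1+√(1-4r(1-r)(1-γ̄²)))/(2(1-r)γ̄²)` and
`λ = (1+√(1-4r(1-r)(1-γ̄²)))/2`,
`T(gh_n, aQ₂gh_n) - λ(gh_n, aQ₂gh_n) → 0`. -/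
theorem stmt_16 {KX KY : Type*} [NormedAddCommGroup KX] [InnerProductSpace ℝ KX]
    [CompleteSpace KX] [NormedAddCommGroup KY] [InnerProductSpace ℝ KY]
    [CompleteSpace KY]
    (Q₁ : KY →L[ℝ] KX) (Q₂ : KX →L[ℝ] KY) (r γ : ℝ)
    (hr : 0 < r) (hr1 : r < 1) (hγ0 : 0 < γ) (hγ1 : γ < 1)
    (T : KX × KY → KX × KY)
    (hT : ∀ p : KX × KY, T p = ((1 - r) • (p.1 + Q₁ p.2), r • (Q₂ p.1 + p.2)))
    (hsa : ∀ f g : KX, ⟪Q₁ (Q₂ f), g⟫ = ⟪f, Q₁ (Q₂ g)⟫)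
    (hpos : ∀ f : KX, 0 ≤ ⟪Q₁ (Q₂ f), f⟫)
    (hnorm : ‖Q₁.comp Q₂‖ = γ^2)
    (gh : ℕ → KX) (hunit : ∀ n, ‖gh n‖ = 1)
    (happrox : Tendsto (fun n => Q₁ (Q₂ (gh n)) - γ^2 • gh n) atTop (nhds 0)) :
    let a := (2*r - 1 + Real.sqrt (1 - 4*r*(1-r)*(1-γ^2))) / (2*(1-r)*γ^2)
    let lam := (1 + Real.sqrt (1 - 4*r*(1-r)*(1-γ^2))) / 2
    Tendsto (fun n => T (gh n, a • Q₂ (gh n)) - lam • ((gh n, a • Q₂ (gh n)) : KX × KY))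
      atTop (nhds 0) := by
  intro a lam
  set s := Real.sqrt (1 - 4*r*(1-r)*(1-γ^2)) with hs
  have hγ2 : (0:ℝ) < γ^2 := by positivity
  have hrr : (0:ℝ) < 1 - r := by linarith
  have hdisc : (0:ℝ) ≤ 1 - 4*r*(1-r)*(1-γ^2) := by nlinarith [sq_nonneg (2*r-1), mul_pos hr hrr, sq_nonneg γ, hγ1.le]
  have hs2 : s^2 = 1 - 4*r*(1-r)*(1-γ^2) := Real.sq_sqrt hdisc
  have hden : 2*(1-r)*γ^2 ≠ 0 := by positivity
  have h1 : (1-r)*(1 + a*γ^2) = lam := by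
    show (1-r)*(1 + (2*r - 1 + s) / (2*(1-r)*γ^2) * γ^2) = (1 + s)/2
    field_simp
    ring
  have h2 : r*(1+a) = lam*a := by
    show r*(1 + (2*r - 1 + s) / (2*(1-r)*γ^2)) = (1 + s)/2 * ((2*r - 1 + s) / (2*(1-r)*γ^2))
    field_simp
    linear_combination (-1:ℝ) * hs2
  have key : ∀ n, T (gh n, a • Q₂ (gh n)) - lam • ((gh n, a • Q₂ (gh n)) : KX × KY)
      = (((1-r)*a) • (Q₁ (Q₂ (gh n)) - γ^2 • gh n), (0:KY)) := by
    intro n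
    rw [hT]
    refine Prod.ext ?_ ?_
    · show (1-r) • (gh n + Q₁ (a • Q₂ (gh n))) - lam • gh n
        = ((1-r)*a) • (Q₁ (Q₂ (gh n)) - γ^2 • gh n)
      rw [map_smul]
      have hc : lam = (1-r) + (1-r)*a*γ^2 := by linarith [h1]; 
      rw [hc]
      module
    · show r • (Q₂ (gh n) + a • Q₂ (gh n)) - lam • (a • Q₂ (gh n)) = 0
      have hc : lam * a = r + r*a := by linarith [h2]
      rw [smul_smul, hc]
      module
  have : Tendsto (fun n => ((((1-r)*a) • (Q₁ (Q₂ (gh n)) - γ^2 • gh n), (0:KY)) : KX × KY))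
      atTop (nhds (0,0)) := by
    refine Tendsto.prodMk_nhds ?_ tendsto_const_nhds
    simpa using happrox.const_smul ((1-r)*a)
  simpa only [key, Prod.mk_zero_zero] using this
end
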